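/- Let p, q be coprime with 0 < q < p and p/q = [2, 2, ..., 2, a_{t+1}, ..., a_n] where the first t+1 entries equal 2 (0 ≤ t < n), a_{t+1} > 2, and all a_i ≥ 2. Let p_t/q_t = [a_{t+1}, ..., a_n] in lowest terms. Then q_t/(p_t - q_t) = q/(p - q) - (t + 1) as rational numbers, and p_t - q_t = p - q. -/

import Mathlib

/-- Hirzebruch–Jung continued fraction `[c₁, …, c_k] = c₁ - 1/(c₂ - 1/(… - 1/c_k))`. -/
def hjCF : List ℤ → ℚ
  | [] => 0
  | a :: l => (a : ℚ) - (hjCF l)⁻¹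

lemma hjKey (L : List ℤ) (x : ℚ) (hx : 1 < x) (hL : hjCF L = x) :
    ∀ t : ℕ, hjCF (List.replicate (t+1) 2 ++ L)
      = (((t:ℚ)+2)*x - ((t:ℚ)+1)) / (((t:ℚ)+1)*x - t) := by
  intro t
  induction t with
  | zero =>
      have hx0 : x ≠ 0 := by linarith
      show (2:ℚ) - (hjCF L)⁻¹ = _
      rw [hL]
      push_cast
      rw [inv_eq_one_div, sub_div' hx0]
      congr 1 <;> ring
  | succ n ih =>
      have h1 : (0:ℚ) < ((n:ℚ)+1)*x - n := by
        have h : ((n:ℚ)+1)*x - n = (n:ℚ)*(x-1) + x := by ring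
        rw [h]
        have : (0:ℚ) ≤ (n:ℚ)*(x-1) := mul_nonneg (by positivity) (by linarith)
        linarith
      have h2 : (0:ℚ) < ((n:ℚ)+2)*x - ((n:ℚ)+1) := by
        have h : ((n:ℚ)+2)*x - ((n:ℚ)+1) = ((n:ℚ)+1)*(x-1) + x := by ring
        rw [h]
        have : (0:ℚ) ≤ ((n:ℚ)+1)*(x-1) := mul_nonneg (by positivity) (by linarith)
        linarith
      show (2:ℚ) - (hjCF (List.replicate (n+1) 2 ++ L))⁻¹ = _
      rw [ih, inv_div, sub_div' h2.ne']
      rw [div_eq_div_iff h2.ne' (by push_cast; linarith : ((↑(n+1):ℚ)+1)*x - ↑(n+1) ≠ 0)]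
      push_cast
      ring

theorem stmt17 (t : ℕ) (b : ℤ) (l : List ℤ) (p q pt qt : ℤ)
    (hb : 2 < b) (hl : ∀ x ∈ l, 2 ≤ x)
    (hq : 0 < q) (hqp : q < p) (hcop : IsCoprime p q)
    (hfull : hjCF (List.replicate (t + 1) 2 ++ (b :: l)) = (p : ℚ) / q)
    (hqt : 0 < qt) (hptqt : qt < pt) (hcopt : IsCoprime pt qt)
    (htail : hjCF (b :: l) = (pt : ℚ) / qt) :
    (qt : ℚ) / ((pt : ℚ) - qt) = (q : ℚ) / ((p : ℚ) - q) - ((t : ℚ) + 1) ∧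
      pt - qt = p - q := by
  have hqt0 : (qt:ℚ) ≠ 0 := by exact_mod_cast hqt.ne'
  have hqtQ : (0:ℚ) < qt := by exact_mod_cast hqt
  have hx : 1 < (pt:ℚ)/qt := by
    rw [one_lt_div hqtQ]
    exact_mod_cast hptqt
  have key := hjKey (b :: l) ((pt:ℚ)/qt) hx htail t
  rw [hfull] at key
  set N : ℤ := (t+2)*pt - (t+1)*qt with hN
  set D : ℤ := (t+1)*pt - t*qt with hD
  have hDpos : 0 < D := by
    have h : D = t*(pt - qt) + pt := by rw [hD]; ring
    rw [h]
    have h1 : (0:ℤ) ≤ t*(pt - qt) := mul_nonneg (by positivity) (by linarith)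
    linarith
  have hNpos : 0 < N := by
    have h : N = (t+1)*(pt - qt) + pt := by rw [hN]; ring
    rw [h]
    have h1 : (0:ℤ) ≤ ((t:ℤ)+1)*(pt - qt) := mul_nonneg (by positivity) (by linarith)
    linarith
  have hDQ : (0:ℚ) < D := by exact_mod_cast hDpos
  have hq0 : (q:ℚ) ≠ 0 := by exact_mod_cast hq.ne'
  have hNq : ((t:ℚ)+2)*((pt:ℚ)/qt) - ((t:ℚ)+1) = (N:ℚ)/qt := by
    rw [hN]; push_cast; field_simp
  have hDq : ((t:ℚ)+1)*((pt:ℚ)/qt) - (t:ℚ) = (D:ℚ)/qt := by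
    rw [hD]; push_cast; field_simp
  rw [hNq, hDq, div_div_div_comm, div_self hqt0, div_one] at key
  have hcrossZ : p * D = N * q := by
    rw [div_eq_div_iff hq0 hDQ.ne'] at key
    exact_mod_cast key
  have hcopND : IsCoprime N D := by
    obtain ⟨a, c, hac⟩ := hcopt
    refine ⟨a*(-(t:ℤ)) + c*(-((t:ℤ)+1)), a*((t:ℤ)+1) + c*((t:ℤ)+2), ?_⟩
    have h : (a*(-(t:ℤ)) + c*(-((t:ℤ)+1))) * N + (a*((t:ℤ)+1) + c*((t:ℤ)+2)) * D
        = a * pt + c * qt := by rw [hN, hD]; ring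
    rw [h, hac]
  have hqD : q = D := by
    have h1 : q ∣ D := by
      have hd : q ∣ p * D := ⟨N, by linarith [hcrossZ]⟩
      exact hcop.symm.dvd_of_dvd_mul_left hd
    have h2 : D ∣ q := by
      have hd : D ∣ N * q := ⟨p, by linarith [hcrossZ]⟩
      exact hcopND.symm.dvd_of_dvd_mul_left hd
    exact Int.dvd_antisymm hq.le hDpos.le h1 h2
  have hpN : p = N := by
    have h := hcrossZ
    rw [hqD] at h
    exact mul_right_cancel₀ hDpos.ne' (by linarith [h])
  have hPQ : pt - qt = p - q := by rw [hpN, hqD, hN, hD]; ring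
  refine ⟨?_, hPQ⟩
  have hd0 : (pt:ℚ) - qt ≠ 0 := by
    have h : (qt:ℚ) < pt := by exact_mod_cast hptqt
    linarith
  have hpq : (p:ℚ) - q = (pt:ℚ) - qt := by exact_mod_cast hPQ.symm
  rw [hpq]
  have hqD' : (q:ℚ) = ((t:ℚ)+1)*pt - t*qt := by
    rw [hqD, hD]; push_cast; ring
  rw [hqD']
  field_simp
  ring
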